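/- Theorem (Thm. 9 of the paper: ASC statistic approximation). Let p̂ and q be probability densities on ℝ^d, let φ : (0,∞) → ℝ be measurable, set ψ(t) = φ(t)/(1+t), and let ρ̂ and ρ̂_E be positive measurable functions on ℝ^d such that ∫_{ℝ^d} p̂(x)·|ψ(ρ̂(x)) − ψ(ρ̂_E(x))| dx ≤ ε and ∫_{ℝ^d} q(x)·|ψ(ρ̂(x)) − ψ(ρ̂_E(x))| dx ≤ ε. Let Ŷ = (ŷ₁,…,ŷ_m) be drawn from the m-fold product of the measure with density p̂ and Y = (y₁,…,y_m) from the m-fold product of the measure with density q (on a common probability space), and let δ ∈ (0,1). Then with probability at least 1 − δ, |ASC_φ(Ŷ, Y, ρ̂) − ASC_φ(Ŷ, Y, ρ̂_E)| ≤ 2ε/δ. -/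

import Mathlib

open MeasureTheory

noncomputable section

lemma map_eval_pi_prob {ι : Type*} [Fintype ι] [DecidableEq ι] {α : ι → Type*}
    [∀ i, MeasurableSpace (α i)]
    (μ : ∀ i, Measure (α i)) [∀ i, IsProbabilityMeasure (μ i)] (i : ι) :
    Measure.map (Function.eval i) (Measure.pi μ) = μ i := by
  ext s hs
  rw [Measure.map_apply (measurable_pi_apply i) hs]
  have h : Function.eval i ⁻¹' s =
      Set.pi Set.univ (Function.update (fun j => (Set.univ : Set (α j))) i s) := by
    ext x
    simp only [Set.mem_preimage, Set.mem_pi, Set.mem_univ, true_implies, Function.eval]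
    constructor
    · intro hx j
      rcases eq_or_ne j i with rfl | hj
      · simpa using hx
      · simp [Function.update_of_ne hj]
    · intro hx
      have := hx i
      simpa using this
  rw [h, Measure.pi_pi]
  rw [Finset.prod_eq_single i]
  · simp
  · intro j _ hj
    simp [Function.update_of_ne hj]
  · simp


/-- A probability density on `ℝ^d`: measurable, nonnegative, integrating to 1
w.r.t. Lebesgue measure. -/
def IsDensity (d : ℕ) (p : (Fin d → ℝ) → ℝ) : Prop :=
  Measurable p ∧ (∀ x, 0 ≤ p x) ∧ (∫ x, p x) = 1

/-- The measure on `ℝ^d` with density `p` w.r.t. Lebesgue measure. -/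
def densMeasure {d : ℕ} (p : (Fin d → ℝ) → ℝ) : Measure (Fin d → ℝ) :=
  volume.withDensity (fun x => ENNReal.ofReal (p x))

/-- The `n`-fold product of the measure on `ℝ^d` with density `p`. -/
def prodDens {d : ℕ} (n : ℕ) (p : (Fin d → ℝ) → ℝ) :
    Measure (Fin n → Fin d → ℝ) :=
  Measure.pi (fun _ : Fin n => densMeasure p)

/-- The ASC statistic
`ASC_φ(Ŷ, Y, ρ) = (1/m) ∑ᵢ ψ(ρ(ŷᵢ)) + (1/m) ∑ᵢ ψ(ρ(yᵢ))` with
`ψ(t) = φ(t)/(1+t)`. -/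
def ASC {d m : ℕ} (φ : ℝ → ℝ) (Yhat Y : Fin m → Fin d → ℝ)
    (ρ : (Fin d → ℝ) → ℝ) : ℝ :=
  (1 / (m : ℝ)) * ∑ i, φ (ρ (Yhat i)) / (1 + ρ (Yhat i))
    + (1 / (m : ℝ)) * ∑ i, φ (ρ (Y i)) / (1 + ρ (Y i))

lemma densMeasure_prob {d : ℕ} {p : (Fin d → ℝ) → ℝ} (hp : IsDensity d p) :
    IsProbabilityMeasure (densMeasure p) := by
  obtain ⟨hmeas, hnn, hint⟩ := hp
  have hInt : Integrable p := by
    by_contra h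
    rw [integral_undef h] at hint
    norm_num at hint
  constructor
  rw [densMeasure, withDensity_apply _ MeasurableSet.univ, setLIntegral_univ,
    ← ofReal_integral_eq_lintegral_ofReal hInt (Filter.Eventually.of_forall hnn), hint]
  norm_num

/-- **Theorem 9: ASC statistic approximation.** -/
theorem ASC_approx
    {d : ℕ} (phat q : (Fin d → ℝ) → ℝ)
    (hphat : IsDensity d phat) (hq : IsDensity d q)
    (φ : ℝ → ℝ) (hφ : Measurable φ)
    (ρhat ρE : (Fin d → ℝ) → ℝ)
    (hρhat_meas : Measurable ρhat) (hρhat_pos : ∀ x, 0 < ρhat x)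
    (hρE_meas : Measurable ρE) (hρE_pos : ∀ x, 0 < ρE x)
    (ε : ℝ)
    (hint₁ : Integrable (fun x => phat x *
      |φ (ρhat x) / (1 + ρhat x) - φ (ρE x) / (1 + ρE x)|))
    (h₁ : ∫ x, phat x * |φ (ρhat x) / (1 + ρhat x) - φ (ρE x) / (1 + ρE x)| ≤ ε)
    (hint₂ : Integrable (fun x => q x *
      |φ (ρhat x) / (1 + ρhat x) - φ (ρE x) / (1 + ρE x)|))
    (h₂ : ∫ x, q x * |φ (ρhat x) / (1 + ρhat x) - φ (ρE x) / (1 + ρE x)| ≤ ε)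
    (m : ℕ) (hm : 1 ≤ m)
    {Ω : Type*} [MeasurableSpace Ω] (P : Measure Ω) [IsProbabilityMeasure P]
    (Yhat Y : Ω → Fin m → Fin d → ℝ)
    (hYhat : Measurable Yhat) (hY : Measurable Y)
    (hYhatlaw : Measure.map Yhat P = prodDens m phat)
    (hYlaw : Measure.map Y P = prodDens m q)
    (δ : ℝ) (hδ0 : 0 < δ) (hδ1 : δ < 1) :
    ENNReal.ofReal (1 - δ) ≤
      P {ω | |ASC φ (Yhat ω) (Y ω) ρhat - ASC φ (Yhat ω) (Y ω) ρE|
              ≤ 2 * ε / δ} := by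
  set g : (Fin d → ℝ) → ℝ :=
    fun x => |φ (ρhat x) / (1 + ρhat x) - φ (ρE x) / (1 + ρE x)| with hgdef
  have hg_nn : ∀ x, 0 ≤ g x := fun x => abs_nonneg _
  have hg_meas : Measurable g :=
    (((hφ.comp hρhat_meas).div (measurable_const.add hρhat_meas)).sub
      ((hφ.comp hρE_meas).div (measurable_const.add hρE_meas))).abs
  have hεnn : 0 ≤ ε :=
    le_trans (integral_nonneg fun x => mul_nonneg (hphat.2.1 x) (hg_nn x)) h₁
  have hm0 : (m : ℝ) ≠ 0 := by positivity
  -- key per-coordinate lintegral bound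
  have key : ∀ (p : (Fin d → ℝ) → ℝ) (hp : IsDensity d p) (V : Ω → Fin m → Fin d → ℝ)
      (hV : Measurable V) (hlaw : Measure.map V P = prodDens m p)
      (hI : Integrable (fun x => p x * g x)) (hb : ∫ x, p x * g x ≤ ε) (i : Fin m),
      ∫⁻ ω, ENNReal.ofReal (g (V ω i)) ∂P ≤ ENNReal.ofReal ε := by
    intro p hp V hV hlaw hI hb i
    haveI := densMeasure_prob hp
    have hmap : Measure.map (fun ω => V ω i) P = densMeasure p := by
      have h2 : Measure.map (Function.eval i ∘ V) P = densMeasure p := by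
        rw [← Measure.map_map (measurable_pi_apply i) hV, hlaw, prodDens,
          map_eval_pi_prob]
      exact h2
    calc ∫⁻ ω, ENNReal.ofReal (g (V ω i)) ∂P
        = ∫⁻ x, ENNReal.ofReal (g x) ∂(densMeasure p) := by
          rw [← hmap, lintegral_map hg_meas.ennreal_ofReal hV.eval]
      _ = ∫⁻ x, ENNReal.ofReal (p x) * ENNReal.ofReal (g x) := by
          rw [densMeasure, lintegral_withDensity_eq_lintegral_mul _
            hp.1.ennreal_ofReal hg_meas.ennreal_ofReal]
          rfl
      _ = ∫⁻ x, ENNReal.ofReal (p x * g x) := by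
          simp_rw [ENNReal.ofReal_mul (hp.2.1 _)]
      _ = ENNReal.ofReal (∫ x, p x * g x) :=
          (ofReal_integral_eq_lintegral_ofReal hI
            (Filter.Eventually.of_forall fun x => mul_nonneg (hp.2.1 x) (hg_nn x))).symm
      _ ≤ ENNReal.ofReal ε := ENNReal.ofReal_le_ofReal hb
  -- the dominating statistic
  set Z : Ω → ℝ := fun ω =>
    (1 / (m : ℝ)) * ∑ i, g (Yhat ω i) + (1 / (m : ℝ)) * ∑ i, g (Y ω i) with hZdef
  have hterm_nn : ∀ (V : Ω → Fin m → Fin d → ℝ) (ω : Ω),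
      0 ≤ (1 / (m : ℝ)) * ∑ i, g (V ω i) := by
    intro V ω
    exact mul_nonneg (by positivity) (Finset.sum_nonneg fun i _ => hg_nn _)
  -- measurability of pieces
  have hmeas_piece : ∀ (V : Ω → Fin m → Fin d → ℝ) (_ : Measurable V),
      Measurable (fun ω => (1 / (m : ℝ)) * ∑ i, g (V ω i)) := by
    intro V hV
    exact (Finset.measurable_sum Finset.univ
      (fun i _ => hg_meas.comp ((measurable_pi_apply i).comp hV))).const_mul _
  -- pointwise domination
  have hdiff : ∀ ω, |ASC φ (Yhat ω) (Y ω) ρhat - ASC φ (Yhat ω) (Y ω) ρE| ≤ Z ω := by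
    intro ω
    simp only [ASC, hZdef]
    have e1 : (1 / (m : ℝ)) * ∑ i, φ (ρhat (Yhat ω i)) / (1 + ρhat (Yhat ω i))
        + (1 / (m : ℝ)) * ∑ i, φ (ρhat (Y ω i)) / (1 + ρhat (Y ω i))
        - ((1 / (m : ℝ)) * ∑ i, φ (ρE (Yhat ω i)) / (1 + ρE (Yhat ω i))
        + (1 / (m : ℝ)) * ∑ i, φ (ρE (Y ω i)) / (1 + ρE (Y ω i)))
        = (1 / (m : ℝ)) * ∑ i, (φ (ρhat (Yhat ω i)) / (1 + ρhat (Yhat ω i))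
            - φ (ρE (Yhat ω i)) / (1 + ρE (Yhat ω i)))
          + (1 / (m : ℝ)) * ∑ i, (φ (ρhat (Y ω i)) / (1 + ρhat (Y ω i))
            - φ (ρE (Y ω i)) / (1 + ρE (Y ω i))) := by
      rw [Finset.sum_sub_distrib, Finset.sum_sub_distrib]; ring
    rw [e1]
    refine (abs_add_le _ _).trans (add_le_add ?_ ?_) <;>
    · rw [abs_mul, abs_of_nonneg (by positivity : (0:ℝ) ≤ 1 / (m : ℝ))]
      exact mul_le_mul_of_nonneg_left (Finset.abs_sum_le_sum_abs _ _) (by positivity)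
  -- bound each half of E[Z]
  have half : ∀ (p : (Fin d → ℝ) → ℝ) (hp : IsDensity d p) (V : Ω → Fin m → Fin d → ℝ)
      (hV : Measurable V) (hlaw : Measure.map V P = prodDens m p)
      (hI : Integrable (fun x => p x * g x)) (hb : ∫ x, p x * g x ≤ ε),
      ∫⁻ ω, ENNReal.ofReal ((1 / (m : ℝ)) * ∑ i, g (V ω i)) ∂P ≤ ENNReal.ofReal ε := by
    intro p hp V hV hlaw hI hb
    have step1 : ∀ ω, ENNReal.ofReal ((1 / (m : ℝ)) * ∑ i, g (V ω i))
        = ENNReal.ofReal (1 / (m : ℝ)) * ∑ i, ENNReal.ofReal (g (V ω i)) := by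
      intro ω
      rw [ENNReal.ofReal_mul (by positivity),
        ENNReal.ofReal_sum_of_nonneg (fun i _ => hg_nn _)]
    simp_rw [step1]
    have hmeas_i : ∀ i : Fin m, Measurable (fun ω => ENNReal.ofReal (g (V ω i))) :=
      fun i => (hg_meas.comp hV.eval).ennreal_ofReal
    have hmeas_sum : Measurable (fun ω => ∑ i : Fin m, ENNReal.ofReal (g (V ω i))) :=
      Finset.measurable_sum Finset.univ (fun i _ => hmeas_i i)
    rw [lintegral_const_mul _ hmeas_sum, lintegral_finset_sum _ (fun i _ => hmeas_i i)]
    calc ENNReal.ofReal (1 / (m : ℝ)) * ∑ i : Fin m, ∫⁻ ω, ENNReal.ofReal (g (V ω i)) ∂P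
        ≤ ENNReal.ofReal (1 / (m : ℝ)) * ∑ _i : Fin m, ENNReal.ofReal ε :=
          mul_le_mul_right (Finset.sum_le_sum fun i _ => key p hp V hV hlaw hI hb i) _
      _ = ENNReal.ofReal ε := by
          rw [Finset.sum_const, Finset.card_univ, Fintype.card_fin, nsmul_eq_mul,
            ← mul_assoc]
          have : ENNReal.ofReal (1 / (m : ℝ)) * (m : ENNReal) = 1 := by
            rw [show ((m : ℕ) : ENNReal) = ENNReal.ofReal (m : ℝ) by
                simp [ENNReal.ofReal_natCast],
              ← ENNReal.ofReal_mul (by positivity)]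
            rw [one_div, inv_mul_cancel₀ hm0]
            simp
          rw [this, one_mul]
  have hEZ : ∫⁻ ω, ENNReal.ofReal (Z ω) ∂P ≤ ENNReal.ofReal (2 * ε) := by
    have split : ∀ ω, ENNReal.ofReal (Z ω)
        = ENNReal.ofReal ((1 / (m : ℝ)) * ∑ i, g (Yhat ω i))
          + ENNReal.ofReal ((1 / (m : ℝ)) * ∑ i, g (Y ω i)) := by
      intro ω
      rw [hZdef]
      exact ENNReal.ofReal_add (hterm_nn Yhat ω) (hterm_nn Y ω)
    simp_rw [split]
    rw [lintegral_add_left ((hmeas_piece Yhat hYhat).ennreal_ofReal)]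
    calc _ ≤ ENNReal.ofReal ε + ENNReal.ofReal ε :=
          add_le_add (half phat hphat Yhat hYhat hYhatlaw hint₁ h₁)
            (half q hq Y hY hYlaw hint₂ h₂)
      _ = ENNReal.ofReal (2 * ε) := by
          rw [← ENNReal.ofReal_add hεnn hεnn]; ring_nf
  have hZmeas : Measurable Z := (hmeas_piece Yhat hYhat).add (hmeas_piece Y hY)
  -- bound the bad event
  have hbad : P {ω | ¬ Z ω ≤ 2 * ε / δ} ≤ ENNReal.ofReal δ := by
    rcases eq_or_lt_of_le hεnn with hε0 | hεpos
    · -- ε = 0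
      have hz : ∫⁻ ω, ENNReal.ofReal (Z ω) ∂P = 0 := by
        refine le_antisymm ?_ zero_le
        simpa [← hε0] using hEZ
      have hae : (fun ω => ENNReal.ofReal (Z ω)) =ᵐ[P] 0 :=
        (lintegral_eq_zero_iff hZmeas.ennreal_ofReal).mp hz
      have : P {ω | ¬ Z ω ≤ 2 * ε / δ} = 0 := by
        refine measure_mono_null ?_ (ae_iff.mp hae)
        intro ω hω
        simp only [Set.mem_setOf_eq, not_le] at hω ⊢
        have hpos : 0 < Z ω := lt_of_le_of_lt (by rw [← hε0]; simp [hδ0.le]) hω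
        simp [Pi.zero_apply, ENNReal.ofReal_eq_zero, not_le, hpos]
      rw [this]
      exact zero_le
    · -- ε > 0
      have hc : (0 : ℝ) < 2 * ε / δ := by positivity
      have hsub : {ω | ¬ Z ω ≤ 2 * ε / δ}
          ⊆ {ω | ENNReal.ofReal (2 * ε / δ) ≤ ENNReal.ofReal (Z ω)} := by
        intro ω hω
        simp only [Set.mem_setOf_eq, not_le] at hω
        exact ENNReal.ofReal_le_ofReal hω.le
      refine le_trans (measure_mono hsub) ?_
      refine le_trans (meas_ge_le_lintegral_div hZmeas.ennreal_ofReal.aemeasurable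
        (by simpa [ENNReal.ofReal_eq_zero] using hc) ENNReal.ofReal_ne_top) ?_
      refine le_trans (ENNReal.div_le_div_right hEZ _) ?_
      rw [← ENNReal.ofReal_div_of_pos hc]
      apply ENNReal.ofReal_le_ofReal
      have h2ε : (2:ℝ) * ε ≠ 0 := by positivity
      have heq : 2 * ε / (2 * ε / δ) = δ := by
        rw [div_div_eq_mul_div, mul_comm (2 * ε) δ, mul_div_assoc,
          div_self h2ε, mul_one]
      rw [heq]
  -- conclude
  have hset : {ω | Z ω ≤ 2 * ε / δ}
      ⊆ {ω | |ASC φ (Yhat ω) (Y ω) ρhat - ASC φ (Yhat ω) (Y ω) ρE| ≤ 2 * ε / δ} :=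
    fun ω hω => le_trans (hdiff ω) hω
  refine le_trans ?_ (measure_mono hset)
  have hms : MeasurableSet {ω | Z ω ≤ 2 * ε / δ} :=
    hZmeas (measurableSet_Iic : MeasurableSet (Set.Iic (2 * ε / δ)))
  have hcompl : P {ω | Z ω ≤ 2 * ε / δ} = 1 - P {ω | Z ω ≤ 2 * ε / δ}ᶜ := by
    rw [prob_compl_eq_one_sub hms]
    have hle : P {ω | Z ω ≤ 2 * ε / δ} ≤ 1 := prob_le_one
    rw [ENNReal.sub_sub_cancel ENNReal.one_ne_top hle]
  rw [hcompl]
  have hcompl_eq : {ω | Z ω ≤ 2 * ε / δ}ᶜ = {ω | ¬ Z ω ≤ 2 * ε / δ} := rfl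
  rw [hcompl_eq]
  calc ENNReal.ofReal (1 - δ) = 1 - ENNReal.ofReal δ := by
        rw [ENNReal.ofReal_sub _ hδ0.le, ENNReal.ofReal_one]
    _ ≤ 1 - P {ω | ¬ Z ω ≤ 2 * ε / δ} := tsub_le_tsub_left hbad 1
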